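/- Let (H_i, d_i)_{i∈ℤ} be a cochain complex of complex Hilbert spaces such that each d_i is Fredholm, i.e., the range of d_i is closed, ker(d_i) is finite-dimensional, and the orthogonal complement of range(d_i) in H_{i+1} is finite-dimensional. Then for every i ∈ ℤ the Laplace operator Δ_i is Fredholm: its range is closed, ker(Δ_i) is finite-dimensional, and the orthogonal complement of range(Δ_i) in H_i is finite-dimensional. -/

import Mathlib

set_option maxHeartbeats 1000000

open scoped ComplexInnerProductSpace

section Aux

open ContinuousLinearMap Submodule

variable {E F : Type*} [NormedAddCommGroup E] [InnerProductSpace ℂ E] [CompleteSpace E]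
  [NormedAddCommGroup F] [InnerProductSpace ℂ F] [CompleteSpace F]

/-- A continuous linear map with closed range is bounded below on the orthogonal
complement of its kernel. -/
lemma aux_bdd_below (T : E →L[ℂ] F) (h : IsClosed (Set.range T)) :
    ∃ c : ℝ, 0 < c ∧ ∀ x ∈ (LinearMap.ker (T : E →ₗ[ℂ] F))ᗮ, ‖x‖ ≤ c * ‖T x‖ := by
  haveI : CompleteSpace ((LinearMap.ker (T : E →ₗ[ℂ] F))ᗮ : Submodule ℂ E) :=
    (LinearMap.ker (T : E →ₗ[ℂ] F)).isClosed_orthogonal.completeSpace_coe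
  haveI : CompleteSpace (LinearMap.range (T : E →ₗ[ℂ] F)) := by
    refine IsClosed.completeSpace_coe (hs := ?_)
    rwa [LinearMap.coe_range]
  haveI : CompleteSpace (LinearMap.ker (T : E →ₗ[ℂ] F)) := T.isClosed_ker.completeSpace_coe
  set f : ((LinearMap.ker (T : E →ₗ[ℂ] F))ᗮ : Submodule ℂ E) →L[ℂ] LinearMap.range (T : E →ₗ[ℂ] F) :=
    (T.comp (LinearMap.ker (T : E →ₗ[ℂ] F))ᗮ.subtypeL).codRestrict (LinearMap.range (T : E →ₗ[ℂ] F))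
    (fun x => LinearMap.mem_range_self _ _) with hf
  have hker : LinearMap.ker (f : ((LinearMap.ker (T : E →ₗ[ℂ] F))ᗮ : Submodule ℂ E) →ₗ[ℂ] LinearMap.range (T : E →ₗ[ℂ] F)) = ⊥ := by
    rw [LinearMap.ker_eq_bot]
    intro x y hxy
    have hx : T x.1 = T y.1 := congrArg Subtype.val hxy
    have hmem : (x.1 - y.1 : E) ∈ LinearMap.ker (T : E →ₗ[ℂ] F) := by
      simp [LinearMap.mem_ker, map_sub, hx]
    have hmem' : (x.1 - y.1 : E) ∈ (LinearMap.ker (T : E →ₗ[ℂ] F))ᗮ :=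
      Submodule.sub_mem _ x.2 y.2
    have h0 : (inner ℂ (x.1 - y.1 : E) (x.1 - y.1 : E) : ℂ) = 0 :=
      (Submodule.mem_orthogonal _ _).mp hmem' _ hmem
    exact Subtype.ext (sub_eq_zero.mp (inner_self_eq_zero.mp h0))
  have hrange : LinearMap.range (f : ((LinearMap.ker (T : E →ₗ[ℂ] F))ᗮ : Submodule ℂ E) →ₗ[ℂ] LinearMap.range (T : E →ₗ[ℂ] F)) = ⊤ := by
    rw [LinearMap.range_eq_top]
    rintro ⟨y, z, rfl⟩
    obtain ⟨a, ha, b, hb, rfl⟩ := (LinearMap.ker (T : E →ₗ[ℂ] F)).exists_add_mem_mem_orthogonal z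
    refine ⟨⟨b, hb⟩, ?_⟩
    apply Subtype.ext
    rw [hf]
    simp only [ContinuousLinearMap.coe_coe, ContinuousLinearMap.coe_codRestrict_apply, ContinuousLinearMap.comp_apply,
      Submodule.subtypeL_apply, map_add, LinearMap.mem_ker.mp ha, zero_add]
    rfl
  set e := ContinuousLinearEquiv.ofBijective f hker hrange with he
  refine ⟨‖(e.symm : (LinearMap.range (T : E →ₗ[ℂ] F)) →L[ℂ] ((LinearMap.ker (T : E →ₗ[ℂ] F))ᗮ : Submodule ℂ E))‖ + 1,
    by positivity, fun x hx => ?_⟩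
  have h1 : (⟨x, hx⟩ : ((LinearMap.ker (T : E →ₗ[ℂ] F))ᗮ : Submodule ℂ E)) = e.symm (e ⟨x, hx⟩) :=
    (e.symm_apply_apply _).symm
  have h2 : ‖(⟨x, hx⟩ : ((LinearMap.ker (T : E →ₗ[ℂ] F))ᗮ : Submodule ℂ E))‖ ≤
      ‖(e.symm : (LinearMap.range (T : E →ₗ[ℂ] F)) →L[ℂ] ((LinearMap.ker (T : E →ₗ[ℂ] F))ᗮ : Submodule ℂ E))‖ *
      ‖e ⟨x, hx⟩‖ := by
    conv_lhs => rw [h1]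
    have := (e.symm : (LinearMap.range (T : E →ₗ[ℂ] F)) →L[ℂ]
      ((LinearMap.ker (T : E →ₗ[ℂ] F))ᗮ : Submodule ℂ E)).le_opNorm (e ⟨x, hx⟩)
    rwa [ContinuousLinearEquiv.coe_coe] at this
  have h3 : ‖e ⟨x, hx⟩‖ = ‖T x‖ := by
    rw [ContinuousLinearEquiv.coeFn_ofBijective]
    rfl
  have h4 : ‖(⟨x, hx⟩ : ((LinearMap.ker (T : E →ₗ[ℂ] F))ᗮ : Submodule ℂ E))‖ = ‖x‖ := rfl
  rw [h4, h3] at h2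
  nlinarith [norm_nonneg (T x), h2]

/-- If `T` is bounded below on `(ker T)ᗮ`, then its adjoint is bounded below on the
range of `T` (with the same constant). -/
lemma aux_adjoint_bdd (T : E →L[ℂ] F) {c : ℝ}
    (hb : ∀ x ∈ (LinearMap.ker (T : E →ₗ[ℂ] F))ᗮ, ‖x‖ ≤ c * ‖T x‖) :
    ∀ y ∈ LinearMap.range (T : E →ₗ[ℂ] F), ‖y‖ ≤ c * ‖ContinuousLinearMap.adjoint T y‖ := by
  haveI : CompleteSpace (LinearMap.ker (T : E →ₗ[ℂ] F)) := T.isClosed_ker.completeSpace_coe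
  rintro y ⟨z, rfl⟩
  obtain ⟨a, ha, b, hb', rfl⟩ := (LinearMap.ker (T : E →ₗ[ℂ] F)).exists_add_mem_mem_orthogonal z
  rw [map_add, LinearMap.mem_ker.mp ha, zero_add]
  by_cases hz : T b = 0
  · simp [hz]
  have h1 : (inner ℂ (T b) (T b) : ℂ) = inner ℂ b (ContinuousLinearMap.adjoint T (T b)) :=
    (ContinuousLinearMap.adjoint_inner_right T b (T b)).symm
  have h2 : ‖T b‖ ^ 2 = RCLike.re (inner ℂ b (ContinuousLinearMap.adjoint T (T b)) : ℂ) := by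
    rw [← h1, inner_self_eq_norm_sq]
  have h3 : RCLike.re (inner ℂ b (ContinuousLinearMap.adjoint T (T b)) : ℂ) ≤
      ‖b‖ * ‖ContinuousLinearMap.adjoint T (T b)‖ := by
    calc RCLike.re (inner ℂ b (ContinuousLinearMap.adjoint T (T b)) : ℂ)
        ≤ ‖(inner ℂ b (ContinuousLinearMap.adjoint T (T b)) : ℂ)‖ := RCLike.re_le_norm _
      _ ≤ _ := norm_inner_le_norm _ _
  have h4 : ‖b‖ ≤ c * ‖T b‖ := hb b hb'
  have h5 : 0 < ‖T b‖ := norm_pos_iff.mpr hz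
  simp only [ContinuousLinearMap.coe_coe]
  nlinarith [norm_nonneg (ContinuousLinearMap.adjoint T (T b)), norm_nonneg b]

end Aux

/-- The `i`-th Laplace operator of a cochain complex `(H i, d i)` of complex Hilbert
spaces, acting on `H (i+1)`: `Δ_{i+1} = d_i ∘ (d_i)* + (d_{i+1})* ∘ d_{i+1}`. -/
noncomputable def Lap (H : ℤ → Type*) [∀ i, NormedAddCommGroup (H i)]
    [∀ i, InnerProductSpace ℂ (H i)] [∀ i, CompleteSpace (H i)]
    (d : ∀ i, H i →L[ℂ] H (i + 1)) (i : ℤ) : H (i + 1) →L[ℂ] H (i + 1) :=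
  (d i).comp (ContinuousLinearMap.adjoint (d i)) +
    (ContinuousLinearMap.adjoint (d (i + 1))).comp (d (i + 1))

/-- If every differential of a cochain complex of complex Hilbert spaces is Fredholm
(closed range, finite-dimensional kernel, finite-dimensional orthogonal complement of
the range), then every Laplace operator is Fredholm. -/
theorem stmt9 (H : ℤ → Type*) [∀ i, NormedAddCommGroup (H i)]
    [∀ i, InnerProductSpace ℂ (H i)] [∀ i, CompleteSpace (H i)]
    (d : ∀ i, H i →L[ℂ] H (i + 1))
    (hd : ∀ i, (d (i + 1)).comp (d i) = 0)
    (hclosed : ∀ i : ℤ, IsClosed (Set.range (d i)))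
    (hker : ∀ i : ℤ, FiniteDimensional ℂ (LinearMap.ker (d i : H i →ₗ[ℂ] H (i + 1))))
    (hcoker : ∀ i : ℤ, FiniteDimensional ℂ ((LinearMap.range (d i : H i →ₗ[ℂ] H (i + 1)))ᗮ)) :
    ∀ i : ℤ, IsClosed (Set.range (Lap H d i)) ∧
      FiniteDimensional ℂ (LinearMap.ker (Lap H d i : H (i + 1) →ₗ[ℂ] H (i + 1))) ∧
      FiniteDimensional ℂ ((LinearMap.range (Lap H d i : H (i + 1) →ₗ[ℂ] H (i + 1)))ᗮ) := by
  intro i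
  -- notation
  have hST : ∀ x : H i, d (i + 1) (d i x) = 0 := by
    intro x
    have := ContinuousLinearMap.ext_iff.mp (hd i) x
    simpa using this
  have hA : ∀ x : H (i + 1), Lap H d i x =
      d i (ContinuousLinearMap.adjoint (d i) x) +
      ContinuousLinearMap.adjoint (d (i + 1)) (d (i + 1) x) := by
    intro x
    simp [Lap, ContinuousLinearMap.add_apply, ContinuousLinearMap.comp_apply]
  -- the key energy identity
  have key : ∀ x : H (i + 1), RCLike.re (inner ℂ (Lap H d i x) x : ℂ) =
      ‖ContinuousLinearMap.adjoint (d i) x‖ ^ 2 + ‖d (i + 1) x‖ ^ 2 := by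
    intro x
    have h1 : (inner ℂ (Lap H d i x) x : ℂ) =
        inner ℂ (ContinuousLinearMap.adjoint (d i) x) (ContinuousLinearMap.adjoint (d i) x) +
        inner ℂ (d (i + 1) x) (d (i + 1) x) := by
      rw [hA x, inner_add_left]
      congr 1
      · exact (ContinuousLinearMap.adjoint_inner_right (d i)
          (ContinuousLinearMap.adjoint (d i) x) x).symm
      · exact ContinuousLinearMap.adjoint_inner_left _ _ _
    rw [h1, map_add, inner_self_eq_norm_sq, inner_self_eq_norm_sq]
  -- kernel characterization
  have hker_iff : ∀ x : H (i + 1), Lap H d i x = 0 ↔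
      ContinuousLinearMap.adjoint (d i) x = 0 ∧ d (i + 1) x = 0 := by
    intro x
    constructor
    · intro h0
      have hk := key x
      rw [h0, inner_zero_left, map_zero] at hk
      have hP : ‖ContinuousLinearMap.adjoint (d i) x‖ ^ 2 ≤ 0 := by
        nlinarith [sq_nonneg ‖d (i + 1) x‖]
      have hQ : ‖d (i + 1) x‖ ^ 2 ≤ 0 := by
        nlinarith [sq_nonneg ‖ContinuousLinearMap.adjoint (d i) x‖]
      constructor
      · rw [← norm_eq_zero]
        exact (pow_eq_zero_iff two_ne_zero).mp (le_antisymm hP (sq_nonneg _))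
      · rw [← norm_eq_zero]
        exact (pow_eq_zero_iff two_ne_zero).mp (le_antisymm hQ (sq_nonneg _))
    · rintro ⟨h1, h2⟩
      rw [hA x, h1, h2, map_zero, map_zero, add_zero]
  -- the Laplacian is self-adjoint
  have hsa : ContinuousLinearMap.adjoint (Lap H d i) = Lap H d i := by
    simp [Lap, map_add, ContinuousLinearMap.adjoint_comp,
      ContinuousLinearMap.adjoint_adjoint, add_comm]
  -- kernel is contained in the (finite-dimensional) cokernel of d i
  have hker_le : LinearMap.ker (Lap H d i : H (i + 1) →ₗ[ℂ] H (i + 1)) ≤ (LinearMap.range (d i : H i →ₗ[ℂ] H (i + 1)))ᗮ := by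
    intro x hx
    obtain ⟨h1, h2⟩ := (hker_iff x).mp (LinearMap.mem_ker.mp hx)
    rw [Submodule.mem_orthogonal]
    rintro u ⟨z, rfl⟩
    rw [ContinuousLinearMap.coe_coe, ← ContinuousLinearMap.adjoint_inner_right, h1, inner_zero_right]
  haveI hfinker : FiniteDimensional ℂ (LinearMap.ker (Lap H d i : H (i + 1) →ₗ[ℂ] H (i + 1))) := by
    haveI := hcoker i
    exact Submodule.finiteDimensional_of_le hker_le
  -- orthogonal complement of the range is the kernel
  have horth : (LinearMap.range (Lap H d i : H (i + 1) →ₗ[ℂ] H (i + 1)))ᗮ = LinearMap.ker (Lap H d i : H (i + 1) →ₗ[ℂ] H (i + 1)) := by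
    ext x
    simp only [Submodule.mem_orthogonal, LinearMap.mem_ker]
    constructor
    · intro hx
      have h0 : (inner ℂ (Lap H d i x) (Lap H d i x) : ℂ) = 0 := by
        have hy := hx (Lap H d i (Lap H d i x)) ⟨Lap H d i x, rfl⟩
        calc (inner ℂ (Lap H d i x) (Lap H d i x) : ℂ)
            = inner ℂ (Lap H d i x) (ContinuousLinearMap.adjoint (Lap H d i) x) := by rw [hsa]
          _ = inner ℂ (Lap H d i (Lap H d i x)) x :=
              ContinuousLinearMap.adjoint_inner_right _ _ _
          _ = 0 := hy
      exact inner_self_eq_zero.mp h0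
    · rintro hx u ⟨z, rfl⟩
      calc (inner ℂ (Lap H d i z) x : ℂ)
          = inner ℂ (ContinuousLinearMap.adjoint (Lap H d i) z) x := by rw [hsa]
        _ = inner ℂ z (Lap H d i x) := ContinuousLinearMap.adjoint_inner_left _ _ _
        _ = 0 := by rw [show Lap H d i x = 0 from hx, inner_zero_right]
  -- now the closed range
  obtain ⟨c₁, hc₁, hb₁⟩ := aux_bdd_below (d i) (hclosed i)
  obtain ⟨c₂, hc₂, hb₂⟩ := aux_bdd_below (d (i + 1)) (hclosed (i + 1))
  have hTb := aux_adjoint_bdd (d i) hb₁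
  haveI : CompleteSpace (LinearMap.ker (d (i + 1) : H (i + 1) →ₗ[ℂ] H (i + 1 + 1))) :=
    (d (i + 1)).isClosed_ker.completeSpace_coe
  haveI : CompleteSpace (LinearMap.range (d i : H i →ₗ[ℂ] H (i + 1))) := by
    refine IsClosed.completeSpace_coe (hs := ?_)
    rw [LinearMap.coe_range]
    exact hclosed i
  haveI : CompleteSpace (LinearMap.ker (Lap H d i : H (i + 1) →ₗ[ℂ] H (i + 1))) :=
    (Lap H d i).isClosed_ker.completeSpace_coe
  have hmain : ∀ x ∈ (LinearMap.ker (Lap H d i : H (i + 1) →ₗ[ℂ] H (i + 1)))ᗮ,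
      ‖x‖ ≤ (c₁ ^ 2 + c₂ ^ 2) * ‖Lap H d i x‖ := by
    intro x hx
    by_cases hx0 : x = 0
    · rw [hx0]; simp
    obtain ⟨a, ha, b, hb, hxab⟩ :=
      (LinearMap.ker (d (i + 1) : H (i + 1) →ₗ[ℂ] H (i + 1 + 1))).exists_add_mem_mem_orthogonal x
    have hTb0 : ContinuousLinearMap.adjoint (d i) b = 0 := by
      rw [← inner_self_eq_zero (𝕜 := ℂ), ContinuousLinearMap.adjoint_inner_left]
      exact (Submodule.mem_orthogonal' _ _).mp hb _
        (LinearMap.mem_ker.mpr (hST _))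
    have hSa : d (i + 1) a = 0 := LinearMap.mem_ker.mp ha
    obtain ⟨u, hu, v, hv, hauv⟩ :=
      (LinearMap.range (d i : H i →ₗ[ℂ] H (i + 1))).exists_add_mem_mem_orthogonal a
    have hTv : ContinuousLinearMap.adjoint (d i) v = 0 := by
      rw [← inner_self_eq_zero (𝕜 := ℂ), ContinuousLinearMap.adjoint_inner_left]
      exact (Submodule.mem_orthogonal' _ _).mp hv _ (LinearMap.mem_range_self _ _)
    have hveq : v = a - u := by rw [hauv]; abel
    have hSv : d (i + 1) v = 0 := by
      obtain ⟨w, hw⟩ := hu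
      rw [hveq, map_sub, hSa, ← hw, ContinuousLinearMap.coe_coe, hST, sub_zero]
    have hvker : v ∈ LinearMap.ker (Lap H d i : H (i + 1) →ₗ[ℂ] H (i + 1)) :=
      LinearMap.mem_ker.mpr ((hker_iff v).mpr ⟨hTv, hSv⟩)
    have h1 : (inner ℂ v u : ℂ) = 0 := Submodule.inner_left_of_mem_orthogonal hu hv
    have h2 : (inner ℂ v x : ℂ) = 0 := Submodule.inner_right_of_mem_orthogonal hvker hx
    have h3 : (inner ℂ v b : ℂ) = 0 :=
      Submodule.inner_right_of_mem_orthogonal (LinearMap.mem_ker.mpr hSv) hb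
    have haeq : a = x - b := by rw [hxab]; abel
    have hva : (inner ℂ v a : ℂ) = 0 := by
      rw [haeq, inner_sub_right, h2, h3, sub_zero]
    have hvv : (inner ℂ v v : ℂ) = 0 := by
      nth_rewrite 2 [hveq]
      rw [inner_sub_right, hva, h1, sub_zero]
    have hv0 : v = 0 := inner_self_eq_zero.mp hvv
    have ha_range : a ∈ LinearMap.range (d i : H i →ₗ[ℂ] H (i + 1)) := by
      rw [hauv, hv0, add_zero]; exact hu
    have hna : ‖a‖ ≤ c₁ * ‖ContinuousLinearMap.adjoint (d i) a‖ := hTb a ha_range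
    have hnb : ‖b‖ ≤ c₂ * ‖d (i + 1) b‖ := hb₂ b hb
    have hTx : ContinuousLinearMap.adjoint (d i) x =
        ContinuousLinearMap.adjoint (d i) a := by
      rw [hxab, map_add, hTb0, add_zero]
    have hSx : d (i + 1) x = d (i + 1) b := by
      rw [hxab, map_add, hSa, zero_add]
    have hx2 : ‖x‖ ^ 2 = ‖a‖ ^ 2 + ‖b‖ ^ 2 := by
      have hab := norm_add_sq_eq_norm_sq_add_norm_sq_of_inner_eq_zero a b
        (Submodule.inner_right_of_mem_orthogonal ha hb)
      rw [hxab, pow_two, pow_two, pow_two]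
      exact hab
    have hkey := key x
    rw [hTx, hSx] at hkey
    have hCS : RCLike.re (inner ℂ (Lap H d i x) x : ℂ) ≤ ‖Lap H d i x‖ * ‖x‖ :=
      le_trans (RCLike.re_le_norm _) (norm_inner_le_norm _ _)
    have hA2 : ‖a‖ ^ 2 ≤ c₁ ^ 2 * ‖ContinuousLinearMap.adjoint (d i) a‖ ^ 2 := by
      nlinarith [norm_nonneg a, norm_nonneg (ContinuousLinearMap.adjoint (d i) a)]
    have hB2 : ‖b‖ ^ 2 ≤ c₂ ^ 2 * ‖d (i + 1) b‖ ^ 2 := by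
      nlinarith [norm_nonneg b, norm_nonneg (d (i + 1) b)]
    have hxpos : 0 < ‖x‖ := norm_pos_iff.mpr hx0
    have hfin : ‖x‖ ^ 2 ≤ (c₁ ^ 2 + c₂ ^ 2) * (‖Lap H d i x‖ * ‖x‖) := by
      nlinarith [sq_nonneg ‖ContinuousLinearMap.adjoint (d i) a‖,
        sq_nonneg ‖d (i + 1) b‖, sq_nonneg c₁, sq_nonneg c₂]
    nlinarith
  -- assemble: the range of the Laplacian is the range of its restriction to (ker)ᗮ
  haveI : CompleteSpace ((LinearMap.ker (Lap H d i : H (i + 1) →ₗ[ℂ] H (i + 1)))ᗮ : Submodule ℂ (H (i + 1))) :=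
    (LinearMap.ker (Lap H d i : H (i + 1) →ₗ[ℂ] H (i + 1))).isClosed_orthogonal.completeSpace_coe
  set g := (Lap H d i).comp (LinearMap.ker (Lap H d i : H (i + 1) →ₗ[ℂ] H (i + 1)))ᗮ.subtypeL with hg
  have hanti : AntilipschitzWith ((c₁ ^ 2 + c₂ ^ 2).toNNReal) g := by
    apply ContinuousLinearMap.antilipschitz_of_bound
    intro x
    have hx := hmain x.1 x.2
    rw [Real.coe_toNNReal _ (by positivity)]
    exact hx
  have hclosed_g : IsClosed (Set.range g) := hanti.isClosed_range g.uniformContinuous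
  have hrange_eq : Set.range (Lap H d i) = Set.range g := by
    ext y
    constructor
    · rintro ⟨x, rfl⟩
      obtain ⟨k, hk, x', hx', rfl⟩ :=
        (LinearMap.ker (Lap H d i : H (i + 1) →ₗ[ℂ] H (i + 1))).exists_add_mem_mem_orthogonal x
      refine ⟨⟨x', hx'⟩, ?_⟩
      rw [hg]
      simp only [ContinuousLinearMap.comp_apply, Submodule.subtypeL_apply]
      rw [map_add, show Lap H d i k = 0 from LinearMap.mem_ker.mp hk, zero_add]
    · rintro ⟨x, rfl⟩
      exact ⟨x.1, rfl⟩
  refine ⟨?_, hfinker, ?_⟩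
  · rw [hrange_eq]; exact hclosed_g
  · rw [horth]; exact hfinker
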